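/- Let λ ∈ ℂ with |λ| > 1, let ψ : ℂ → ℂ be entire (nonconstant), and suppose there is an affine automorphism h(z) = az + b of ℂ with a ≠ 0, b ≠ 0 such that ψ ∘ h = ψ. Define g(z) = az + λb. Then ψ ∘ g = ψ, provided ψ satisfies the functional equation ψ(λz) = F(ψ(z)) for some function F : ℂ → ℂ. -/

import Mathlib

/-- If an entire nonconstant `ψ` satisfies the Poincaré functional equation
`ψ(λz) = F(ψ(z))` with `|λ| > 1` and is invariant under the affine map
`h(z) = az + b` (with `a ≠ 0`, `b ≠ 0`), then it is also invariant under
`g(z) = az + λb`. -/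
theorem stmt_0 (lam a b : ℂ) (hlam : 1 < ‖lam‖)
    (ψ F : ℂ → ℂ) (hψ : Differentiable ℂ ψ) (hnc : ¬ ∃ c : ℂ, ψ = fun _ => c)
    (ha : a ≠ 0) (hb : b ≠ 0)
    (hinv : ∀ z : ℂ, ψ (a * z + b) = ψ z)
    (hfun : ∀ z : ℂ, ψ (lam * z) = F (ψ z)) :
    ∀ z : ℂ, ψ (a * z + lam * b) = ψ z := by
  intro z
  have hl : lam ≠ 0 := by
    intro h; rw [h] at hlam; norm_num at hlam
  have key : a * z + lam * b = lam * (a * (lam⁻¹ * z) + b) := by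
    field_simp
  rw [key, hfun, hinv, ← hfun, mul_inv_cancel_left₀ hl]
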